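/- arXiv:1701.06405 — 3 statements merged into one kernel-verified Lean document; each statement's English description precedes it below -/
import Mathlib

section
/- Fix integers s ≥ 1 and d. The map J ↦ (α_1(J,d)+1, …, α_s(J,d)+1), where α_t(J,d) = j_t + Σ_{l>t} 2^{l−(t+1)} j_l + 2^{s−t} d, restricts to a bijection from the set of strictly decreasing sequences J ∈ ℕ^s (j_1 > j_2 > ⋯ > j_s ≥ 0) onto the set of admissible sequences I ∈ ℤ^s with i_s > d. -/
/-- The upper index `α_t(J, d)` obtained from the lower-indexed Dyer-Lashof
monomial `Q_{j_1} ⋯ Q_{j_s}` applied to a class of degree `d`. -/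
def alphaSeq (J : ℕ → ℕ) (d : ℤ) (s t : ℕ) : ℤ :=
  (J t : ℤ) + ∑ l ∈ Finset.Icc (t + 1) s, 2 ^ (l - (t + 1)) * (J l : ℤ) + 2 ^ (s - t) * d

lemma alphaSeq_last (J : ℕ → ℕ) (d : ℤ) (s : ℕ) : alphaSeq J d s s = (J s : ℤ) + d := by
  unfold alphaSeq
  rw [Finset.Icc_eq_empty (by omega), Finset.sum_empty]
  simp

lemma alphaSeq_rec (J : ℕ → ℕ) (d : ℤ) (s t : ℕ) (h : t < s) :
    alphaSeq J d s t = (J t : ℤ) - (J (t + 1) : ℤ) + 2 * alphaSeq J d s (t + 1) := by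
  unfold alphaSeq
  have hA : ∑ l ∈ Finset.Icc (t + 1) s, (2 : ℤ) ^ (l - (t + 1)) * (J l : ℤ)
      = ∑ i ∈ Finset.range (s - t), (2 : ℤ) ^ i * (J (t + 1 + i) : ℤ) := by
    rw [← Finset.Ico_add_one_right_eq_Icc, Finset.sum_Ico_eq_sum_range]
    apply Finset.sum_congr (by congr 1; omega)
    intro i _
    congr 2
    omega
  have hB : ∑ l ∈ Finset.Icc (t + 1 + 1) s, (2 : ℤ) ^ (l - (t + 1 + 1)) * (J l : ℤ)
      = ∑ i ∈ Finset.range (s - t - 1), (2 : ℤ) ^ i * (J (t + 2 + i) : ℤ) := by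
    rw [← Finset.Ico_add_one_right_eq_Icc, Finset.sum_Ico_eq_sum_range]
    apply Finset.sum_congr (by congr 1; omega)
    intro i _
    congr 2
    omega
  rw [hA, hB]
  have hn : s - t = (s - t - 1) + 1 := by omega
  rw [hn, Finset.sum_range_succ']
  have hstep : ∑ i ∈ Finset.range (s - t - 1), (2 : ℤ) ^ (i + 1) * (J (t + 1 + (i + 1)) : ℤ)
      = 2 * ∑ i ∈ Finset.range (s - t - 1), (2 : ℤ) ^ i * (J (t + 2 + i) : ℤ) := by
    rw [Finset.mul_sum]
    apply Finset.sum_congr rfl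
    intro i _
    have : t + 1 + (i + 1) = t + 2 + i := by omega
    rw [this]
    ring
  rw [hstep]
  have hpow : (2 : ℤ) ^ (s - t - 1 + 1) = 2 * 2 ^ (s - (t + 1)) := by
    rw [pow_succ]
    have : s - t - 1 = s - (t + 1) := by omega
    rw [this]; ring
  rw [hpow]
  simp only [pow_zero, one_mul, Nat.add_sub_cancel, Nat.add_zero]
  ring

/-- Auxiliary recursion building the inverse sequence from the top index down. -/
def invG (I : ℕ → ℤ) (d : ℤ) (s : ℕ) : ℕ → ℕ
  | 0 => (I s - d - 1).toNat
  | k + 1 => invG I d s k + 1 + (I (s - (k + 1)) - 2 * I (s - k)).toNat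

/-- The inverse map: `J t` recovered from the admissible sequence `I`. -/
def invJ (I : ℕ → ℤ) (d : ℤ) (s t : ℕ) : ℕ := invG I d s (s - t)

lemma invJ_last (I : ℕ → ℤ) (d : ℤ) (s : ℕ) : invJ I d s s = (I s - d - 1).toNat := by
  simp [invJ, invG]

lemma invJ_rec (I : ℕ → ℤ) (d : ℤ) (s t : ℕ) (h : t < s) :
    invJ I d s t = invJ I d s (t + 1) + 1 + (I t - 2 * I (t + 1)).toNat := by
  unfold invJ
  have h1 : s - t = (s - (t + 1)) + 1 := by omega
  rw [h1, invG]
  have e1 : s - ((s - (t + 1)) + 1) = t := by omega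
  have e2 : s - (s - (t + 1)) = t + 1 := by omega
  rw [e1, e2]

lemma exists_part (s : ℕ) (d : ℤ) (I : ℕ → ℤ)
    (hadm : ∀ t, 1 ≤ t → t < s → 2 * I (t + 1) ≤ I t) (hd : d < I s) :
    ∀ k t, t + k = s → 1 ≤ t → alphaSeq (invJ I d s) d s t + 1 = I t := by
  intro k
  induction k with
  | zero =>
    intro t ht h1
    have hts : t = s := by omega
    subst hts
    rw [alphaSeq_last, invJ_last]
    rw [Int.toNat_of_nonneg (by omega)]
    ring
  | succ k ih =>
    intro t ht h1
    have hts : t < s := by omega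
    rw [alphaSeq_rec _ _ _ _ hts, invJ_rec _ _ _ _ hts]
    have hIH := ih (t + 1) (by omega) (by omega)
    have hpos : 0 ≤ I t - 2 * I (t + 1) := by
      have := hadm t h1 hts; omega
    push_cast [Int.toNat_of_nonneg hpos]
    linarith [hIH]

lemma unique_part (s : ℕ) (d : ℤ) (J K : ℕ → ℕ)
    (hJK : ∀ t, 1 ≤ t → t ≤ s → alphaSeq J d s t = alphaSeq K d s t) :
    ∀ k t, t + k = s → 1 ≤ t → J t = K t := by
  intro k
  induction k with
  | zero =>
    intro t ht h1
    have hts : t = s := by omega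
    subst hts
    have := hJK t h1 le_rfl
    rw [alphaSeq_last, alphaSeq_last] at this
    omega
  | succ k ih =>
    intro t ht h1
    have hts : t < s := by omega
    have h := hJK t h1 (by omega)
    rw [alphaSeq_rec _ _ _ _ hts, alphaSeq_rec _ _ _ _ hts] at h
    have hIH := ih (t + 1) (by omega) (by omega)
    have h2 := hJK (t + 1) (by omega) (by omega)
    rw [hIH, h2] at h
    omega

/-- The map `J ↦ (α_1(J,d)+1, …, α_s(J,d)+1)` is a bijection from strictly
decreasing sequences in `ℕ^s` onto admissible sequences `I ∈ ℤ^s` with `i_s > d`. -/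
theorem phi_bijection (s : ℕ) (hs : 1 ≤ s) (d : ℤ) :
    (∀ J : ℕ → ℕ, (∀ t, 1 ≤ t → t < s → J (t + 1) < J t) →
        ((∀ t, 1 ≤ t → t < s →
            2 * (alphaSeq J d s (t + 1) + 1) ≤ alphaSeq J d s t + 1) ∧
          d < alphaSeq J d s s + 1)) ∧
      (∀ I : ℕ → ℤ, (∀ t, 1 ≤ t → t < s → 2 * I (t + 1) ≤ I t) → d < I s →
        (∃ J : ℕ → ℕ, (∀ t, 1 ≤ t → t < s → J (t + 1) < J t) ∧
            ∀ t, 1 ≤ t → t ≤ s → alphaSeq J d s t + 1 = I t) ∧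
          (∀ J K : ℕ → ℕ,
            (∀ t, 1 ≤ t → t ≤ s → alphaSeq J d s t + 1 = I t) →
            (∀ t, 1 ≤ t → t ≤ s → alphaSeq K d s t + 1 = I t) →
            ∀ t, 1 ≤ t → t ≤ s → J t = K t)) := by
  constructor
  · intro J hJ
    constructor
    · intro t h1 hts
      rw [alphaSeq_rec _ _ _ _ hts]
      have := hJ t h1 hts
      omega
    · rw [alphaSeq_last]
      omega
  · intro I hI hIs
    constructor
    · refine ⟨invJ I d s, ?_, ?_⟩
      · intro t h1 hts
        rw [invJ_rec _ _ _ _ hts]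
        omega
      · intro t h1 hts
        exact exists_part s d I hI hIs (s - t) t (by omega) h1
    · intro J K hJ hK t h1 hts
      refine unique_part s d J K ?_ (s - t) t (by omega) h1
      intro u hu1 hu2
      have := hJ u hu1 hu2
      have := hK u hu1 hu2
      omega
end

section
/- Fix an integer n ≥ 1. Every nonempty admissible sequence I = (i_1, …, i_s) of integers decomposes uniquely as a concatenation I = I' ⧺ I'' where I' has length j and I'' = ω_j I, such that: e(ω_j I) ≤ (n+1) + j whenever j < s, and i_j ≥ (n+1) + d(ω_j I) + j whenever j > 0. Consequently, for each fixed n ≥ 1 the set of admissible sequences of length s is in bijection with the disjoint union over j ∈ {0,…,s} of pairs (I', I'') where I' is admissible of length j with last entry i'_j ≥ (n+1) + d(I'') + j (condition vacuous if j = 0), I'' is admissible of length s − j with e(I'') ≤ (n+1) + j (condition on excess vacuous if j = s, interpreting e(∅) = ∞). -/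
/-- The excess `e(ω_j I)` of the `j`-fold left truncation of the sequence
`I = (i 1, …, i s)`, using the formula `e(K) = k₁ − Σ_{l ≥ 2} k_l`. -/
def seqExcess (i : ℕ → ℤ) (j s : ℕ) : ℤ :=
  i (j + 1) - ∑ l ∈ Finset.Icc (j + 2) s, i l

/-- Every nonempty admissible sequence `I = (i 1, …, i s)` decomposes uniquely
as a concatenation `I' ⧺ ω_j I` with `e(ω_j I) ≤ (n+1) + j` whenever `j < s`
and `i_j ≥ (n+1) + d(ω_j I) + j` whenever `j > 0`. -/
theorem unique_decomposition_delooping (n : ℤ) (hn : 1 ≤ n)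
    (s : ℕ) (hs : 1 ≤ s) (i : ℕ → ℤ)
    (hadm : ∀ j, 1 ≤ j → j < s → 2 * i (j + 1) ≤ i j) :
    ∃! j : ℕ, j ≤ s ∧
      (j < s → seqExcess i j s ≤ (n + 1) + j) ∧
      (0 < j → (n + 1) + (∑ l ∈ Finset.Icc (j + 1) s, i l) + j ≤ i j) := by
  set D : ℕ → ℤ := fun j => ∑ l ∈ Finset.Icc (j + 1) s, i l with hD
  -- split off the bottom entry of the sum
  have hsplit : ∀ j, j < s → D j = i (j + 1) + D (j + 1) := by
    intro j hj
    simp only [hD]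
    rw [← Finset.Ico_add_one_right_eq_Icc, ← Finset.Ico_add_one_right_eq_Icc,
      Finset.sum_eq_sum_Ico_succ_bot (by omega : j + 1 < s + 1)]
  -- the key predicate A j
  set A : ℕ → Prop := fun j => 2 * i (j + 1) ≤ n + 1 + j + D j with hA
  -- the excess condition is equivalent to A
  have hexc : ∀ j, j < s → (seqExcess i j s ≤ (n + 1) + j ↔ A j) := by
    intro j hj
    have h1 : D j = i (j + 1) + D (j + 1) := hsplit j hj
    have h2 : seqExcess i j s = i (j + 1) - D (j + 1) := by
      simp [seqExcess, hD]
    constructor <;> intro h <;> simp only [hA] at * <;> linarith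
  -- the second condition at m+1 is equivalent to ¬ A m
  have hB : ∀ m, m < s →
      (((n + 1) + D (m + 1) + (m + 1 : ℕ) ≤ i (m + 1)) ↔ ¬ A m) := by
    intro m hm
    have h1 : D m = i (m + 1) + D (m + 1) := hsplit m hm
    simp only [hA, not_le]
    push_cast
    constructor <;> intro h <;> linarith
  -- monotonicity of A
  have hmono : ∀ j, j + 1 < s → A j → A (j + 1) := by
    intro j hj hAj
    have h1 : D j = i (j + 1) + D (j + 1) := hsplit j (by omega)
    have h2 : 2 * i (j + 2) ≤ i (j + 1) := hadm (j + 1) (by omega) hj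
    simp only [hA] at *
    push_cast at *
    linarith
  have hmono' : ∀ a b, a ≤ b → b < s → A a → A b := by
    intro a b hab hbs hAa
    induction b with
    | zero => have : a = 0 := by omega
              exact this ▸ hAa
    | succ k ih =>
      rcases Nat.eq_or_lt_of_le hab with h | h
      · exact h ▸ hAa
      · exact hmono k hbs (ih (by omega) (by omega))
  classical
  have hP : ∃ j, j = s ∨ (j < s ∧ A j) := ⟨s, Or.inl rfl⟩
  obtain ⟨j₀, hspec, hmin⟩ :
      ∃ j, (j = s ∨ (j < s ∧ A j)) ∧ ∀ m, m < j → ¬ A m := by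
    refine ⟨Nat.find hP, Nat.find_spec hP, fun m hm hAm => ?_⟩
    have hfs : Nat.find hP ≤ s := by
      rcases Nat.find_spec hP with h | h
      · omega
      · omega
    exact Nat.find_min hP hm (Or.inr ⟨by omega, hAm⟩)
  have hj₀s : j₀ ≤ s := by
    rcases hspec with h | h
    · omega
    · omega
  refine ⟨j₀, ⟨hj₀s, ?_, ?_⟩, ?_⟩
  · intro hlt
    rw [hexc j₀ hlt]
    rcases hspec with h | h
    · omega
    · exact h.2
  · intro hpos
    obtain ⟨m, rfl⟩ : ∃ m, j₀ = m + 1 := ⟨j₀ - 1, by omega⟩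
    rw [hB m (by omega)]
    exact hmin m (by omega)
  · rintro y ⟨hys, hy1, hy2⟩
    by_contra hne
    rcases Nat.lt_or_ge y j₀ with h | h
    · -- y < j₀ ≤ s, so A y holds, contradicting minimality
      have hylt : y < s := by omega
      exact hmin y h ((hexc y hylt).mp (hy1 hylt))
    · have h' : j₀ < y := by omega
      obtain ⟨m, rfl⟩ : ∃ m, y = m + 1 := ⟨y - 1, by omega⟩
      have hms : m < s := by omega
      have hnAm : ¬ A m := (hB m hms).mp (hy2 (by omega))
      have hAj₀ : A j₀ := by
        rcases hspec with h0 | h0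
        · omega
        · exact h0.2
      exact hnAm (hmono' j₀ m (by omega) hms hAj₀)
end

section
/- Fix a natural number n. For every nonempty admissible sequence I of integers of length s, there is a unique j ∈ {0,…,s} such that e(ω_j I) ≤ n whenever j < s, and i_j > d(ω_j I) + n whenever j > 0. -/
theorem unique_decomposition_miller (n : ℕ) (s : ℕ) (hs : 1 ≤ s) (i : ℕ → ℤ)
    (hadm : ∀ j, 1 ≤ j → j < s → 2 * i (j + 1) ≤ i j) :
    ∃! j : ℕ, j ≤ s ∧
      (j < s → seqExcess i j s ≤ n) ∧
      (0 < j → (∑ l ∈ Finset.Icc (j + 1) s, i l) + n < i j) := by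
  -- splitting off the first term of a sum
  have hins : ∀ a : ℕ, a ≤ s →
      ∑ l ∈ Finset.Icc a s, i l = i a + ∑ l ∈ Finset.Icc (a+1) s, i l := by
    intro a ha
    rw [Finset.Icc_eq_cons_Ioc ha, Finset.sum_cons, ← Finset.Icc_add_one_left_eq_Ioc]
  -- the condition for j > 0 is equivalent to `n < seqExcess i (j-1) s`
  have hcond : ∀ k : ℕ, seqExcess i k s = i (k+1) - ∑ l ∈ Finset.Icc (k+2) s, i l := by
    intro k; rfl
  -- one-step antitonicity
  have hstep : ∀ k : ℕ, k + 1 < s → seqExcess i (k+1) s ≤ seqExcess i k s := by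
    intro k hk
    have hadm' := hadm (k+1) (by omega) hk
    have h1 : ∑ l ∈ Finset.Icc (k+2) s, i l = i (k+2) + ∑ l ∈ Finset.Icc (k+3) s, i l := by
      have := hins (k+2) (by omega)
      simpa using this
    rw [hcond, hcond, h1]
    have : k + 1 + 1 = k + 2 := rfl
    rw [this]
    have : k + 1 + 2 = k + 3 := rfl
    rw [this]
    linarith
  -- antitonicity
  have hanti : ∀ a b : ℕ, a ≤ b → b < s → seqExcess i b s ≤ seqExcess i a s := by
    intro a b hab hbs
    induction b with
    | zero => simp_all
    | succ m ih =>
      rcases Nat.eq_or_lt_of_le hab with h | h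
      · rw [h]
      · exact le_trans (hstep m hbs) (ih (by omega) (by omega))
  by_cases h : ∃ j, j < s ∧ seqExcess i j s ≤ n
  · -- j₀ = least such j
    set j₀ := Nat.find h with hj₀
    have hspec := Nat.find_spec h
    refine ⟨j₀, ⟨le_of_lt hspec.1, fun _ => hspec.2, ?_⟩, ?_⟩
    · intro hpos
      obtain ⟨k, hk⟩ : ∃ k, j₀ = k + 1 := ⟨j₀ - 1, by omega⟩
      have hkmin := Nat.find_min h (m := k) (by omega)
      push_neg at hkmin
      have hke : (n : ℤ) < seqExcess i k s := hkmin (by omega)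
      rw [hcond] at hke
      have : k + 1 = j₀ := hk.symm
      rw [this] at hke
      have : k + 2 = j₀ + 1 := by omega
      rw [this] at hke
      linarith
    · intro j' ⟨hj's, hj'1, hj'2⟩
      by_contra hne
      rcases lt_or_gt_of_ne hne with hlt | hgt
      · -- j' < j₀ : contradicts minimality
        have := Nat.find_min h hlt
        push_neg at this
        have hj'lt : j' < s := lt_of_lt_of_le (lt_of_lt_of_le hlt (le_of_lt hspec.1)) le_rfl
        exact absurd (hj'1 hj'lt) (not_le.mpr (this hj'lt))
      · -- j' > j₀
        have hpos : 0 < j' := by omega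
        have h2 := hj'2 hpos
        obtain ⟨k, hk⟩ : ∃ k, j' = k + 1 := ⟨j' - 1, by omega⟩
        -- seqExcess i k s = i j' - ∑ Icc (j'+1) s
        have hEk : seqExcess i k s = i j' - ∑ l ∈ Finset.Icc (j'+1) s, i l := by
          subst hk; rfl
        have hkrange : k < s := by omega
        have hmono := hanti j₀ k (by omega) hkrange
        rw [hEk] at hmono
        have := hspec.2
        linarith
  · -- no j < s with small excess: j₀ = s
    push_neg at h
    refine ⟨s, ⟨le_rfl, fun hss => absurd hss (lt_irrefl s), ?_⟩, ?_⟩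
    · intro _
      have hempty : Finset.Icc (s+1) s = ∅ := by
        apply Finset.Icc_eq_empty; omega
      rw [hempty, Finset.sum_empty]
      obtain ⟨k, hk⟩ : ∃ k, s = k + 1 := ⟨s - 1, by omega⟩
      have := h k (by omega)
      rw [hcond] at this
      have h1 : k + 1 = s := hk.symm
      have h2 : Finset.Icc (k+2) s = ∅ := by apply Finset.Icc_eq_empty; omega
      rw [h1, h2, Finset.sum_empty] at this
      linarith
    · intro j' ⟨hj's, hj'1, _⟩
      by_contra hne
      have hlt : j' < s := lt_of_le_of_ne hj's hne
      exact absurd (hj'1 hlt) (not_le.mpr (h j' hlt))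
end
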